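/- For N ≥ 1 and σ ∈ S_3 (one-line notation), let F_σ(N) := #{(a,b,c,d) ∈ ℕ^4 : a+c+d ≤ N−3+σ(3), a+b+d ≤ N+1−σ(1), a+b+c+2d ≤ 2N−σ(1), a+b+d ≥ 2−σ(1)} (inequalities over the integers). Then for all N ≥ 1: F_{123}(N) = (N+1)(N+2)²(N+3)/12 − 2(N+1); F_{132}(N) = F_{213}(N) = N(N+1)(N+2)(N+3)/12 − N; F_{231}(N) = F_{312}(N) = (N−1)N(N+1)(N+2)/12; and F_{321}(N) = (N−1)N²(N+1)/12. -/

import Mathlib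

open Finset

/-- For `σ ∈ S_3` (acting on `{0, 1, 2}`, so that the 1-indexed values are
`σ(1) = σ 0 + 1` and `σ(3) = σ 2 + 1`) and `N ≥ 1`, the number of quadruples
`(a, b, c, d) ∈ ℕ⁴` with `a + c + d ≤ N - 3 + σ(3)`, `a + b + d ≤ N + 1 - σ(1)`,
`a + b + c + 2d ≤ 2N - σ(1)` and `a + b + d ≥ 2 - σ(1)` (inequalities in `ℤ`). -/
noncomputable def Fcount (σ : Equiv.Perm (Fin 3)) (N : ℕ) : ℕ :=
  Set.ncard {t : ℕ × ℕ × ℕ × ℕ |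
    ((t.1 : ℤ) + t.2.2.1 + t.2.2.2 ≤ (N : ℤ) - 3 + (((σ 2 : ℕ) : ℤ) + 1)) ∧
    ((t.1 : ℤ) + t.2.1 + t.2.2.2 ≤ (N : ℤ) + 1 - (((σ 0 : ℕ) : ℤ) + 1)) ∧
    ((t.1 : ℤ) + t.2.1 + t.2.2.1 + 2 * t.2.2.2 ≤ 2 * (N : ℤ) - (((σ 0 : ℕ) : ℤ) + 1)) ∧
    (2 - (((σ 0 : ℕ) : ℤ) + 1) ≤ (t.1 : ℤ) + t.2.1 + t.2.2.2)}

private lemma psum1 (n : ℕ) : ∑ i ∈ range n, (i:ℚ) = (n:ℚ)*((n:ℚ)-1)/2 := by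
  induction n with
  | zero => simp
  | succ k ih => rw [sum_range_succ, ih]; push_cast; ring

private lemma psum2 (n : ℕ) : ∑ i ∈ range n, (i:ℚ)^2 = (n:ℚ)*((n:ℚ)-1)*(2*(n:ℚ)-1)/6 := by
  induction n with
  | zero => simp
  | succ k ih => rw [sum_range_succ, ih]; push_cast; ring

private lemma psum3 (n : ℕ) : ∑ i ∈ range n, (i:ℚ)^3 = ((n:ℚ)*((n:ℚ)-1)/2)^2 := by
  induction n with
  | zero => simp
  | succ k ih => rw [sum_range_succ, ih]; push_cast; ring

private lemma L2 (n : ℕ) :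
    ∑ s ∈ range (n+1), ((s:ℚ)+1)*((n:ℚ)+1-s)^2 = ((n:ℚ)+1)*((n:ℚ)+2)^2*((n:ℚ)+3)/12 := by
  have h : ∀ s ∈ range (n+1), ((s:ℚ)+1)*((n:ℚ)+1-s)^2
      = (s:ℚ)^3 + (1-2*((n:ℚ)+1))*(s:ℚ)^2 + (((n:ℚ)+1)^2-2*((n:ℚ)+1))*(s:ℚ) + ((n:ℚ)+1)^2 := by
    intro s _; ring
  refine (sum_congr rfl h).trans ?_
  simp only [sum_add_distrib, ← mul_sum, psum1, psum2, psum3, sum_const, card_range,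
    nsmul_eq_mul]
  push_cast; ring

private lemma L1 (n : ℕ) :
    ∑ s ∈ range (n+1), ((s:ℚ)+1)*((n:ℚ)+1-s)*((n:ℚ)+2-s) = ((n:ℚ)+1)*((n:ℚ)+2)*((n:ℚ)+3)*((n:ℚ)+4)/12 := by
  have h : ∀ s ∈ range (n+1), ((s:ℚ)+1)*((n:ℚ)+1-s)*((n:ℚ)+2-s)
      = (s:ℚ)^3 + (1-(2*(n:ℚ)+3))*(s:ℚ)^2 + (((n:ℚ)+1)*((n:ℚ)+2)-(2*(n:ℚ)+3))*(s:ℚ)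
        + ((n:ℚ)+1)*((n:ℚ)+2) := by
    intro s _; ring
  refine (sum_congr rfl h).trans ?_
  simp only [sum_add_distrib, ← mul_sum, psum1, psum2, psum3, sum_const, card_range,
    nsmul_eq_mul]
  push_cast; ring

/-- the core finset: a+c+d ≤ m1, a+b+d ≤ m2 -/
private def coreT (m1 m2 : ℕ) : Finset (ℕ×ℕ×ℕ×ℕ) :=
  ((range (m1+1)) ×ˢ (range (m2+1)) ×ˢ (range (m1+1)) ×ˢ (range (min m1 m2 + 1))).filter
    (fun t => t.1+t.2.2.1+t.2.2.2 ≤ m1 ∧ t.1+t.2.1+t.2.2.2 ≤ m2)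

private lemma mem_coreT {m1 m2 : ℕ} {t : ℕ×ℕ×ℕ×ℕ} :
    t ∈ coreT m1 m2 ↔ t.1+t.2.2.1+t.2.2.2 ≤ m1 ∧ t.1+t.2.1+t.2.2.2 ≤ m2 := by
  obtain ⟨a,b,c,d⟩ := t
  simp only [coreT, mem_filter, mem_product, mem_range]
  try dsimp only
  constructor
  · rintro ⟨-, h⟩; exact h
  · rintro ⟨h1, h2⟩; refine ⟨⟨?_, ?_, ?_, ?_⟩, h1, h2⟩ <;> omega

private lemma coreT_card (m1 m2 : ℕ) :
    (coreT m1 m2).card = ∑ s ∈ range (min m1 m2 + 1), (s+1)*(m1+1-s)*(m2+1-s) := by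
  have key : (coreT m1 m2).card =
      ((range (min m1 m2 + 1)).sigma
        (fun s => (range (s+1)) ×ˢ (range (m1+1-s)) ×ˢ (range (m2+1-s)))).card := by
    apply Finset.card_nbij'
      (i := fun t => ⟨t.1 + t.2.2.2, (t.1, t.2.2.1, t.2.1)⟩)
      (j := fun p => (p.2.1, p.2.2.2, p.2.2.1, p.1 - p.2.1))
    · rintro ⟨a,b,c,d⟩ ht
      rw [Finset.mem_coe, mem_coreT] at ht
      simp only [Finset.mem_coe, mem_sigma, mem_product, mem_range]
      try dsimp only at ht ⊢
      refine ⟨?_, ?_, ?_, ?_⟩ <;> omega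
    · rintro ⟨s,a,c,b⟩ hp
      simp only [Finset.mem_coe, mem_sigma, mem_product, mem_range] at hp
      rw [Finset.mem_coe, mem_coreT]
      refine ⟨show a + c + (s - a) ≤ m1 from ?_, show a + b + (s - a) ≤ m2 from ?_⟩ <;> omega
    · rintro ⟨a,b,c,d⟩ ht
      rw [Finset.mem_coe, mem_coreT] at ht
      have hd : a + d - a = d := by omega
      show (a, b, c, a + d - a) = (a, b, c, d)
      rw [hd]
    · rintro ⟨s,a,c,b⟩ hp
      simp only [Finset.mem_coe, mem_sigma, mem_product, mem_range] at hp
      refine Sigma.ext ?_ (heq_of_eq rfl)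
      show a + (s - a) = s
      omega
  rw [key, Finset.card_sigma]
  apply sum_congr rfl
  intro s _
  simp only [Finset.card_product, card_range]
  ring

/- case 123 -/
private lemma case123 (N : ℕ) (hN : 1 ≤ N) :
    Fcount 1 N + 2*(N+1) = ∑ s ∈ range (N+1), (s+1)*(N+1-s)*(N+1-s) := by
  classical
  have e0 : ((1 : Equiv.Perm (Fin 3)) 0 : ℕ) = 0 := by decide
  have e2 : ((1 : Equiv.Perm (Fin 3)) 2 : ℕ) = 2 := by decide
  have hset : Fcount 1 N = ((coreT N N).filter
      (fun t => t.1+t.2.1+t.2.2.1+2*t.2.2.2 + 1 ≤ 2*N ∧ 1 ≤ t.1+t.2.1+t.2.2.2)).card := by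
    unfold Fcount
    rw [e0, e2, ← Set.ncard_coe_finset]
    congr 1
    ext ⟨a,b,c,d⟩
    simp only [Set.mem_setOf_eq, Finset.mem_coe, Finset.mem_filter, mem_coreT]
    try dsimp only
    constructor
    · rintro ⟨h1,h2,h3,h4⟩; refine ⟨⟨?_,?_⟩,?_,?_⟩ <;> omega
    · rintro ⟨⟨h1,h2⟩,h3,h4⟩; refine ⟨?_,?_,?_,?_⟩ <;> omega
  have hbad : (coreT N N).filter
      (fun t => ¬(t.1+t.2.1+t.2.2.1+2*t.2.2.2 + 1 ≤ 2*N ∧ 1 ≤ t.1+t.2.1+t.2.2.2))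
      = ((range (N+1)).image fun d => ((0:ℕ), N-d, N-d, d))
        ∪ ((range (N+1)).image fun c => ((0:ℕ), 0, c, 0)) := by
    ext ⟨a,b,c,d⟩
    simp only [mem_filter, mem_coreT, mem_union, mem_image, mem_range, Prod.mk.injEq,
      not_and_or, not_le]
    try dsimp only
    constructor
    · rintro ⟨⟨h1,h2⟩, h3 | h4⟩
      · exact Or.inl ⟨d, by omega, by omega, by omega, by omega, rfl⟩
      · exact Or.inr ⟨c, by omega, by omega, by omega, rfl, by omega⟩
    · rintro (⟨e, he, rfl, rfl, rfl, rfl⟩ | ⟨e, he, rfl, rfl, rfl, rfl⟩) <;>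
        exact ⟨⟨by omega, by omega⟩, by omega⟩
  have hdisj : Disjoint ((range (N+1)).image fun d => ((0:ℕ), N-d, N-d, d))
      ((range (N+1)).image fun c => ((0:ℕ), 0, c, 0)) := by
    rw [Finset.disjoint_left]
    rintro ⟨a,b,c,d⟩ h1 h2
    simp only [mem_image, mem_range, Prod.mk.injEq] at h1 h2
    obtain ⟨e, he, -, hb, -, hd⟩ := h1
    obtain ⟨f, hf, -, hb', -, hd'⟩ := h2
    omega
  have hc3 : ((range (N+1)).image fun d => ((0:ℕ), N-d, N-d, d)).card = N+1 := by
    rw [Finset.card_image_of_injective _ (fun x y h => by simpa using congrArg (·.2.2.2) h)]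
    simp
  have hc4 : ((range (N+1)).image fun c => ((0:ℕ), 0, c, 0)).card = N+1 := by
    rw [Finset.card_image_of_injective _ (fun x y h => by simpa using congrArg (·.2.2.1) h)]
    simp
  have htot := Finset.card_filter_add_card_filter_not (s := coreT N N)
      (fun t => t.1+t.2.1+t.2.2.1+2*t.2.2.2 + 1 ≤ 2*N ∧ 1 ≤ t.1+t.2.1+t.2.2.2)
  rw [hbad, Finset.card_union_of_disjoint hdisj, hc3, hc4] at htot
  have hcore := coreT_card N N
  simp only [min_self] at hcore
  omega

/- case 132 -/
private lemma case132 (M : ℕ) :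
    Fcount (Equiv.swap 1 2) (M+1) + (M+1)
      = ∑ s ∈ range (M+1), (s+1)*(M+1-s)*(M+1+1-s) := by
  classical
  have e0 : ((Equiv.swap (1 : Fin 3) 2) 0 : ℕ) = 0 := by decide
  have e2 : ((Equiv.swap (1 : Fin 3) 2) 2 : ℕ) = 1 := by decide
  have hset : Fcount (Equiv.swap 1 2) (M+1) = ((coreT M (M+1)).filter
      (fun t => 1 ≤ t.1+t.2.1+t.2.2.2)).card := by
    unfold Fcount
    rw [e0, e2, ← Set.ncard_coe_finset]
    congr 1
    ext ⟨a,b,c,d⟩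
    simp only [Set.mem_setOf_eq, Finset.mem_coe, Finset.mem_filter, mem_coreT]
    try dsimp only
    constructor
    · rintro ⟨h1,h2,h3,h4⟩; refine ⟨⟨?_,?_⟩,?_⟩ <;> omega
    · rintro ⟨⟨h1,h2⟩,h3⟩; refine ⟨?_,?_,?_,?_⟩ <;> omega
  have hbad : (coreT M (M+1)).filter (fun t => ¬(1 ≤ t.1+t.2.1+t.2.2.2))
      = (range (M+1)).image fun c => ((0:ℕ), 0, c, 0) := by
    ext ⟨a,b,c,d⟩
    simp only [mem_filter, mem_coreT, mem_image, mem_range, Prod.mk.injEq, not_le]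
    try dsimp only
    constructor
    · rintro ⟨⟨h1,h2⟩, h3⟩
      exact ⟨c, by omega, by omega, by omega, rfl, by omega⟩
    · rintro ⟨e, he, rfl, rfl, rfl, rfl⟩
      exact ⟨⟨by omega, by omega⟩, by omega⟩
  have hc4 : ((range (M+1)).image fun c => ((0:ℕ), 0, c, 0)).card = M+1 := by
    rw [Finset.card_image_of_injective _ (fun x y h => by simpa using congrArg (·.2.2.1) h)]
    simp
  have htot := Finset.card_filter_add_card_filter_not (s := coreT M (M+1))
      (fun t => 1 ≤ t.1+t.2.1+t.2.2.2)
  rw [hbad, hc4] at htot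
  have hcore := coreT_card M (M+1)
  have hmin : min M (M+1) = M := by omega
  rw [hmin] at hcore
  omega

/- case 213 -/
private lemma case213 (M : ℕ) :
    Fcount (Equiv.swap 0 1) (M+1) + (M+1)
      = ∑ s ∈ range (M+1), (s+1)*(M+1+1-s)*(M+1-s) := by
  classical
  have e0 : ((Equiv.swap (0 : Fin 3) 1) 0 : ℕ) = 1 := by decide
  have e2 : ((Equiv.swap (0 : Fin 3) 1) 2 : ℕ) = 2 := by decide
  have hset : Fcount (Equiv.swap 0 1) (M+1) = ((coreT (M+1) M).filter
      (fun t => t.1+t.2.1+t.2.2.1+2*t.2.2.2 + 1 ≤ 2*M+1)).card := by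
    unfold Fcount
    rw [e0, e2, ← Set.ncard_coe_finset]
    congr 1
    ext ⟨a,b,c,d⟩
    simp only [Set.mem_setOf_eq, Finset.mem_coe, Finset.mem_filter, mem_coreT]
    try dsimp only
    constructor
    · rintro ⟨h1,h2,h3,h4⟩; refine ⟨⟨?_,?_⟩,?_⟩ <;> omega
    · rintro ⟨⟨h1,h2⟩,h3⟩; refine ⟨?_,?_,?_,?_⟩ <;> omega
  have hbad : (coreT (M+1) M).filter
      (fun t => ¬(t.1+t.2.1+t.2.2.1+2*t.2.2.2 + 1 ≤ 2*M+1))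
      = (range (M+1)).image fun d => ((0:ℕ), M-d, M+1-d, d) := by
    ext ⟨a,b,c,d⟩
    simp only [mem_filter, mem_coreT, mem_image, mem_range, Prod.mk.injEq, not_le]
    try dsimp only
    constructor
    · rintro ⟨⟨h1,h2⟩, h3⟩
      exact ⟨d, by omega, by omega, by omega, by omega, rfl⟩
    · rintro ⟨e, he, rfl, rfl, rfl, rfl⟩
      exact ⟨⟨by omega, by omega⟩, by omega⟩
  have hc3 : ((range (M+1)).image fun d => ((0:ℕ), M-d, M+1-d, d)).card = M+1 := by
    rw [Finset.card_image_of_injective _ (fun x y h => by simpa using congrArg (·.2.2.2) h)]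
    simp
  have htot := Finset.card_filter_add_card_filter_not (s := coreT (M+1) M)
      (fun t => t.1+t.2.1+t.2.2.1+2*t.2.2.2 + 1 ≤ 2*M+1)
  rw [hbad, hc3] at htot
  have hcore := coreT_card (M+1) M
  have hmin : min (M+1) M = M := by omega
  rw [hmin] at hcore
  omega

/- case 231 -/
private lemma case231 (M : ℕ) :
    Fcount (finRotate 3) (M+2) = ∑ s ∈ range (M+1), (s+1)*(M+1-s)*(M+1+1-s) := by
  classical
  have e0 : ((finRotate 3) 0 : ℕ) = 1 := by decide
  have e2 : ((finRotate 3) 2 : ℕ) = 0 := by decide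
  have hset : Fcount (finRotate 3) (M+2) = (coreT M (M+1)).card := by
    unfold Fcount
    rw [e0, e2, ← Set.ncard_coe_finset]
    congr 1
    ext ⟨a,b,c,d⟩
    simp only [Set.mem_setOf_eq, Finset.mem_coe, mem_coreT]
    try dsimp only
    constructor
    · rintro ⟨h1,h2,h3,h4⟩; constructor <;> omega
    · rintro ⟨h1,h2⟩; refine ⟨?_,?_,?_,?_⟩ <;> omega
  rw [hset, coreT_card]
  have hmin : min M (M+1) = M := by omega
  rw [hmin]

/- case 312 -/
private lemma case312 (M : ℕ) :
    Fcount (finRotate 3 * finRotate 3) (M+2)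
      = ∑ s ∈ range (M+1), (s+1)*(M+1+1-s)*(M+1-s) := by
  classical
  have e0 : ((finRotate 3 * finRotate 3) 0 : ℕ) = 2 := by decide
  have e2 : ((finRotate 3 * finRotate 3) 2 : ℕ) = 1 := by decide
  have hset : Fcount (finRotate 3 * finRotate 3) (M+2) = (coreT (M+1) M).card := by
    unfold Fcount
    rw [e0, e2, ← Set.ncard_coe_finset]
    congr 1
    ext ⟨a,b,c,d⟩
    simp only [Set.mem_setOf_eq, Finset.mem_coe, mem_coreT]
    try dsimp only
    constructor
    · rintro ⟨h1,h2,h3,h4⟩; constructor <;> omega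
    · rintro ⟨h1,h2⟩; refine ⟨?_,?_,?_,?_⟩ <;> omega
  rw [hset, coreT_card]
  have hmin : min (M+1) M = M := by omega
  rw [hmin]

/- case 321 -/
private lemma case321 (M : ℕ) :
    Fcount (Equiv.swap 0 2) (M+2) = ∑ s ∈ range (M+1), (s+1)*(M+1-s)*(M+1-s) := by
  classical
  have e0 : ((Equiv.swap (0 : Fin 3) 2) 0 : ℕ) = 2 := by decide
  have e2 : ((Equiv.swap (0 : Fin 3) 2) 2 : ℕ) = 0 := by decide
  have hset : Fcount (Equiv.swap 0 2) (M+2) = (coreT M M).card := by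
    unfold Fcount
    rw [e0, e2, ← Set.ncard_coe_finset]
    congr 1
    ext ⟨a,b,c,d⟩
    simp only [Set.mem_setOf_eq, Finset.mem_coe, mem_coreT]
    try dsimp only
    constructor
    · rintro ⟨h1,h2,h3,h4⟩; constructor <;> omega
    · rintro ⟨h1,h2⟩; refine ⟨?_,?_,?_,?_⟩ <;> omega
  rw [hset, coreT_card]
  simp only [min_self]

/- empty cases for N = 1 -/
private lemma empty1 (σ : Equiv.Perm (Fin 3))
    (h0 : (σ 2 : ℕ) = 0 ∨ (σ 0 : ℕ) = 2) : Fcount σ 1 = 0 := by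
  unfold Fcount
  have : {t : ℕ × ℕ × ℕ × ℕ |
      ((t.1 : ℤ) + t.2.2.1 + t.2.2.2 ≤ ((1:ℕ) : ℤ) - 3 + (((σ 2 : ℕ) : ℤ) + 1)) ∧
      ((t.1 : ℤ) + t.2.1 + t.2.2.2 ≤ ((1:ℕ) : ℤ) + 1 - (((σ 0 : ℕ) : ℤ) + 1)) ∧
      ((t.1 : ℤ) + t.2.1 + t.2.2.1 + 2 * t.2.2.2 ≤ 2 * ((1:ℕ) : ℤ) - (((σ 0 : ℕ) : ℤ) + 1)) ∧
      (2 - (((σ 0 : ℕ) : ℤ) + 1) ≤ (t.1 : ℤ) + t.2.1 + t.2.2.2)} = ∅ := by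
    ext ⟨a,b,c,d⟩
    simp only [Set.mem_setOf_eq, Set.mem_empty_iff_false, iff_false, not_and]
    try dsimp only
    intro h1 h2 h3
    omega
  rw [this, Set.ncard_empty]

/-- The values `|A_σ^N|` for the six permutations `σ ∈ S_3` (written in one-line
notation `123, 132, 213, 231, 312, 321`), for all `N ≥ 1`. -/
theorem counts_A_sigma_N (N : ℕ) (hN : 1 ≤ N) :
    (Fcount 1 N : ℚ) =
        ((N : ℚ) + 1) * ((N : ℚ) + 2) ^ 2 * ((N : ℚ) + 3) / 12 - 2 * ((N : ℚ) + 1) ∧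
    (Fcount (Equiv.swap 1 2) N : ℚ) =
        (N : ℚ) * ((N : ℚ) + 1) * ((N : ℚ) + 2) * ((N : ℚ) + 3) / 12 - (N : ℚ) ∧
    (Fcount (Equiv.swap 0 1) N : ℚ) =
        (N : ℚ) * ((N : ℚ) + 1) * ((N : ℚ) + 2) * ((N : ℚ) + 3) / 12 - (N : ℚ) ∧
    (Fcount (finRotate 3) N : ℚ) =
        ((N : ℚ) - 1) * (N : ℚ) * ((N : ℚ) + 1) * ((N : ℚ) + 2) / 12 ∧
    (Fcount (finRotate 3 * finRotate 3) N : ℚ) =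
        ((N : ℚ) - 1) * (N : ℚ) * ((N : ℚ) + 1) * ((N : ℚ) + 2) / 12 ∧
    (Fcount (Equiv.swap 0 2) N : ℚ) =
        ((N : ℚ) - 1) * (N : ℚ) ^ 2 * ((N : ℚ) + 1) / 12 := by
  have castsum : ∀ (m1 m2 k : ℕ), k ≤ m1 → k ≤ m2 →
      ((∑ s ∈ range (k+1), (s+1)*(m1+1-s)*(m2+1-s) : ℕ) : ℚ)
        = ∑ s ∈ range (k+1), ((s:ℚ)+1)*((m1:ℚ)+1-s)*((m2:ℚ)+1-s) := by
    intro m1 m2 k hk1 hk2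
    rw [Nat.cast_sum]
    apply sum_congr rfl
    intro s hs
    rw [mem_range] at hs
    push_cast [Nat.cast_sub (by omega : s ≤ m1+1), Nat.cast_sub (by omega : s ≤ m2+1)]
    ring
  refine ⟨?_, ?_, ?_, ?_, ?_, ?_⟩
  · -- 123
    have h := case123 N hN
    have hc : ((∑ s ∈ range (N+1), (s+1)*(N+1-s)*(N+1-s) : ℕ) : ℚ)
        = ∑ s ∈ range (N+1), ((s:ℚ)+1)*((N:ℚ)+1-s)^2 := by
      rw [castsum N N N le_rfl le_rfl]
      exact sum_congr rfl (fun s _ => by ring)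
    have hcast := congrArg (fun n : ℕ => (n:ℚ)) h
    simp only [Nat.cast_add, Nat.cast_mul, Nat.cast_ofNat, Nat.cast_one] at hcast
    rw [hc, L2 N] at hcast
    linarith
  · -- 132
    obtain ⟨M, rfl⟩ : ∃ M, N = M + 1 := ⟨N-1, by omega⟩
    have h := case132 M
    have hc : ((∑ s ∈ range (M+1), (s+1)*(M+1-s)*(M+1+1-s) : ℕ) : ℚ)
        = ∑ s ∈ range (M+1), ((s:ℚ)+1)*((M:ℚ)+1-s)*((M:ℚ)+2-s) := by
      rw [castsum M (M+1) M le_rfl (by omega)]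
      exact sum_congr rfl (fun s _ => by push_cast; ring)
    have hcast := congrArg (fun n : ℕ => (n:ℚ)) h
    simp only [Nat.cast_add, Nat.cast_one] at hcast
    rw [hc, L1 M] at hcast
    push_cast
    linarith
  · -- 213
    obtain ⟨M, rfl⟩ : ∃ M, N = M + 1 := ⟨N-1, by omega⟩
    have h := case213 M
    have hc : ((∑ s ∈ range (M+1), (s+1)*(M+1+1-s)*(M+1-s) : ℕ) : ℚ)
        = ∑ s ∈ range (M+1), ((s:ℚ)+1)*((M:ℚ)+1-s)*((M:ℚ)+2-s) := by
      rw [castsum (M+1) M M (by omega) le_rfl]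
      exact sum_congr rfl (fun s _ => by push_cast; ring)
    have hcast := congrArg (fun n : ℕ => (n:ℚ)) h
    simp only [Nat.cast_add, Nat.cast_one] at hcast
    rw [hc, L1 M] at hcast
    push_cast
    linarith
  · -- 231
    rcases Nat.lt_or_ge N 2 with h2 | h2
    · have hN1 : N = 1 := by omega
      subst hN1
      rw [empty1 _ (by decide)]
      norm_num
    · obtain ⟨M, rfl⟩ : ∃ M, N = M + 2 := ⟨N-2, by omega⟩
      have h := case231 M
      have hc : ((∑ s ∈ range (M+1), (s+1)*(M+1-s)*(M+1+1-s) : ℕ) : ℚ)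
          = ∑ s ∈ range (M+1), ((s:ℚ)+1)*((M:ℚ)+1-s)*((M:ℚ)+2-s) := by
        rw [castsum M (M+1) M le_rfl (by omega)]
        exact sum_congr rfl (fun s _ => by push_cast; ring)
      have hcast := congrArg (fun n : ℕ => (n:ℚ)) h
      rw [hc, L1 M] at hcast
      push_cast
      linarith
  · -- 312
    rcases Nat.lt_or_ge N 2 with h2 | h2
    · have hN1 : N = 1 := by omega
      subst hN1
      rw [empty1 _ (by decide)]
      norm_num
    · obtain ⟨M, rfl⟩ : ∃ M, N = M + 2 := ⟨N-2, by omega⟩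
      have h := case312 M
      have hc : ((∑ s ∈ range (M+1), (s+1)*(M+1+1-s)*(M+1-s) : ℕ) : ℚ)
          = ∑ s ∈ range (M+1), ((s:ℚ)+1)*((M:ℚ)+1-s)*((M:ℚ)+2-s) := by
        rw [castsum (M+1) M M (by omega) le_rfl]
        exact sum_congr rfl (fun s _ => by push_cast; ring)
      have hcast := congrArg (fun n : ℕ => (n:ℚ)) h
      rw [hc, L1 M] at hcast
      push_cast
      linarith
  · -- 321
    rcases Nat.lt_or_ge N 2 with h2 | h2
    · have hN1 : N = 1 := by omega
      subst hN1
      rw [empty1 _ (by decide)]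
      norm_num
    · obtain ⟨M, rfl⟩ : ∃ M, N = M + 2 := ⟨N-2, by omega⟩
      have h := case321 M
      have hc : ((∑ s ∈ range (M+1), (s+1)*(M+1-s)*(M+1-s) : ℕ) : ℚ)
          = ∑ s ∈ range (M+1), ((s:ℚ)+1)*((M:ℚ)+1-s)^2 := by
        rw [castsum M M M le_rfl le_rfl]
        exact sum_congr rfl (fun s _ => by ring)
      have hcast := congrArg (fun n : ℕ => (n:ℚ)) h
      rw [hc, L2 M] at hcast
      push_cast
      linarith
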